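/- Let q be a monic complex polynomial of degree d ≥ 1 and let 𝔻 denote the open unit disk in ℂ. Then q_∘(𝔻) = q(𝔻) (equivalently, q⁻¹(q(𝔻)) = 𝔻) holds if and only if there exists c ∈ ℂ such that q(z) = z^d + c. -/

import Mathlib

open Polynomial

/-- The apolarity form `[f,g]_m`. -/
noncomputable def apol (m : ℕ) (f g : Polynomial ℂ) : ℂ :=
  ∑ k ∈ Finset.range (m + 1),
    (-1 : ℂ) ^ k * ((m.choose k : ℂ))⁻¹ * f.coeff k * g.coeff (m - k)

/-- The symmetrization `Sym_N(f)` of a polynomial, as a function on `ι → ℂ`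
with `N = card ι`. -/
noncomputable def symFun {ι : Type*} [Fintype ι] (f : Polynomial ℂ) (y : ι → ℂ) : ℂ :=
  ∑ k ∈ Finset.range (Fintype.card ι + 1),
    (((Fintype.card ι).choose k : ℂ))⁻¹ * f.coeff k *
      MvPolynomial.eval y (MvPolynomial.esymm ι ℂ k)

/-- A circular domain: an open or closed disk or half-plane, or a complement thereof. -/
def IsCircularDomain (D : Set ℂ) : Prop :=
  ∃ (α γ : ℝ) (β : ℂ),
    D = {z : ℂ | α * Complex.normSq z + ((starRingEnd ℂ) β * z).re + γ < 0} ∨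
    D = {z : ℂ | α * Complex.normSq z + ((starRingEnd ℂ) β * z).re + γ ≤ 0}

/-- `q_∘(D) = {u : q⁻¹(u) ⊆ D}`. -/
def innerImage (q : Polynomial ℂ) (D : Set ℂ) : Set ℂ :=
  {u : ℂ | ∀ z : ℂ, q.eval z = u → z ∈ D}

/-- `S_{q,n}(f)(u₁,…,uₙ) = [f∘q, ∏ⱼ (q - uⱼ)]_{nd}`. -/
noncomputable def Sfun (q : Polynomial ℂ) (n : ℕ) (f : Polynomial ℂ) (u : Fin n → ℂ) : ℂ :=
  apol (n * q.natDegree) (f.comp q) (∏ j, (q - Polynomial.C (u j)))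

/-- The Fischer inner product `⟨f,g⟩_n`. -/
noncomputable def fischer (n : ℕ) (f g : Polynomial ℂ) : ℂ :=
  ∑ k ∈ Finset.range (n + 1),
    ((n.choose k : ℂ))⁻¹ * f.coeff k * (starRingEnd ℂ) (g.coeff k)

-- multiset prod lemmas
lemma ms_prod_nonneg (m : Multiset ℝ) (h : ∀ x ∈ m, 0 ≤ x) : 0 ≤ m.prod := by
  induction m using Multiset.induction_on with
  | empty => simp
  | cons a s ih =>
    simp only [Multiset.prod_cons]
    exact mul_nonneg (h a (Multiset.mem_cons_self a s))
      (ih fun x hx => h x (Multiset.mem_cons_of_mem hx))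

lemma ms_prod_le_one (m : Multiset ℝ) (h : ∀ x ∈ m, 0 ≤ x) (h1 : ∀ x ∈ m, x ≤ 1) :
    m.prod ≤ 1 := by
  induction m using Multiset.induction_on with
  | empty => simp
  | cons a s ih =>
    simp only [Multiset.prod_cons]
    have hs : s.prod ≤ 1 := ih (fun x hx => h x (Multiset.mem_cons_of_mem hx))
      (fun x hx => h1 x (Multiset.mem_cons_of_mem hx))
    have hs0 : 0 ≤ s.prod := ms_prod_nonneg s fun x hx => h x (Multiset.mem_cons_of_mem hx)
    exact mul_le_one₀ (h1 a (Multiset.mem_cons_self a s)) hs0 hs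

lemma ms_prod_lt_one (m : Multiset ℝ) (hm : m ≠ 0) (h : ∀ x ∈ m, 0 ≤ x)
    (h1 : ∀ x ∈ m, x < 1) : m.prod < 1 := by
  obtain ⟨a, ha⟩ := Multiset.exists_mem_of_ne_zero hm
  obtain ⟨s, rfl⟩ := Multiset.exists_cons_of_mem ha
  simp only [Multiset.prod_cons]
  have hs : s.prod ≤ 1 := ms_prod_le_one s (fun x hx => h x (Multiset.mem_cons_of_mem hx))
    (fun x hx => le_of_lt (h1 x (Multiset.mem_cons_of_mem hx)))
  have ha0 : 0 ≤ a := h a (Multiset.mem_cons_self a s)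
  calc a * s.prod ≤ a := mul_le_of_le_one_right ha0 hs
    _ < 1 := h1 a (Multiset.mem_cons_self a s)

lemma norm_ms_prod (m : Multiset ℂ) : ‖m.prod‖ = (m.map (fun r => ‖r‖)).prod := by
  induction m using Multiset.induction_on with
  | empty => simp
  | cons a s ih => simp [norm_mul, ih]

lemma monic_sub_C (q : Polynomial ℂ) (hq : q.Monic) (hd : 1 ≤ q.natDegree) (u : ℂ) :
    (q - C u).Monic :=
  hq.sub_of_left (lt_of_le_of_lt degree_C_le (natDegree_pos_iff_degree_pos.mp hd))

lemma card_roots_sub (q : Polynomial ℂ) (hq : q.Monic) (hd : 1 ≤ q.natDegree) (u : ℂ) :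
    Multiset.card (q - C u).roots = q.natDegree := by
  rw [splits_iff_card_roots.mp (IsAlgClosed.splits (q - C u)),
    natDegree_sub_C]

lemma mem_roots_sub (q : Polynomial ℂ) (hq : q.Monic) (hd : 1 ≤ q.natDegree) (u z : ℂ) :
    z ∈ (q - C u).roots ↔ q.eval z = u := by
  have hne : q - C u ≠ 0 := (monic_sub_C q hq hd u).ne_zero
  rw [mem_roots hne]
  simp [IsRoot, sub_eq_zero]

lemma norm_eval_zero_sub (q : Polynomial ℂ) (hq : q.Monic) (hd : 1 ≤ q.natDegree) (u : ℂ) :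
    ‖q.eval 0 - u‖ = ((q - C u).roots.map (fun r => ‖r‖)).prod := by
  have hmp : (q - C u).Monic := monic_sub_C q hq hd u
  have hprod := Splits.eq_prod_roots_of_monic
    (IsAlgClosed.splits (q - C u)) hmp
  have h0 : q.eval 0 - u = ((q - C u).roots.map (fun a => -a)).prod := by
    conv_lhs => rw [show q.eval 0 - u = (q - C u).eval 0 by simp, hprod]
    rw [eval_multiset_prod, Multiset.map_map]
    congr 1
    apply Multiset.map_congr rfl
    intro a _
    simp
  rw [h0, norm_ms_prod, Multiset.map_map]
  congr 1
  apply Multiset.map_congr rfl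
  intro a _
  simp

lemma ball_subset_image (q : Polynomial ℂ) (hq : q.Monic) (hd : 1 ≤ q.natDegree) :
    Metric.ball (q.eval 0) 1 ⊆ (fun z => q.eval z) '' Metric.ball 0 1 := by
  intro u hu
  have hn : ‖q.eval 0 - u‖ < 1 := by
    rw [Metric.mem_ball, dist_eq_norm] at hu
    rwa [norm_sub_rev]
  rw [norm_eval_zero_sub q hq hd u] at hn
  by_contra hcon
  have hall : ∀ r ∈ (q - C u).roots, (1:ℝ) ≤ ‖r‖ := by
    intro r hr
    by_contra hlt
    exact hcon ⟨r, by simpa [Metric.mem_ball] using lt_of_not_ge hlt,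
      (mem_roots_sub q hq hd u r).mp hr⟩
  have : (1:ℝ) ≤ ((q - C u).roots.map (fun r => ‖r‖)).prod :=
    Multiset.one_le_prod (by
      intro x hx
      obtain ⟨r, hr, rfl⟩ := Multiset.mem_map.mp hx
      exact hall r hr)
  linarith

lemma innerImage_subset_ball (q : Polynomial ℂ) (hq : q.Monic) (hd : 1 ≤ q.natDegree)
    {u : ℂ} (hu : u ∈ innerImage q (Metric.ball (0:ℂ) 1)) : u ∈ Metric.ball (q.eval 0) 1 := by
  have hroots : ∀ r ∈ (q - C u).roots, ‖r‖ < 1 := by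
    intro r hr
    have := hu r ((mem_roots_sub q hq hd u r).mp hr)
    simpa [Metric.mem_ball] using this
  have hne : (q - C u).roots ≠ 0 := by
    intro h0
    have := card_roots_sub q hq hd u
    rw [h0] at this
    simp at this
    omega
  have hlt : ((q - C u).roots.map (fun r => ‖r‖)).prod < 1 := by
    apply ms_prod_lt_one
    · simpa using hne
    · intro x hx
      obtain ⟨r, hr, rfl⟩ := Multiset.mem_map.mp hx
      exact norm_nonneg r
    · intro x hx
      obtain ⟨r, hr, rfl⟩ := Multiset.mem_map.mp hx
      exact hroots r hr
  rw [Metric.mem_ball, dist_eq_norm, norm_sub_rev]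
  rw [norm_eval_zero_sub q hq hd u]
  exact hlt


/-- q_∘(𝔻) = q(𝔻) iff q = z^d + c. -/
theorem stmt_3 (d : ℕ) (hd : 1 ≤ d) (q : Polynomial ℂ) (hq : q.Monic)
    (hdeg : q.natDegree = d) :
    innerImage q (Metric.ball (0 : ℂ) 1) = (fun z => q.eval z) '' Metric.ball (0 : ℂ) 1 ↔
      ∃ c : ℂ, q = Polynomial.X ^ d + Polynomial.C c := by
  have hd1 : 1 ≤ q.natDegree := hdeg ▸ hd
  constructor
  · intro h
    set c := q.eval 0 with hc
    set g := q - C c with hgdef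
    have hgm : g.Monic := monic_sub_C q hq hd1 c
    have hgd : g.natDegree = d := by rw [hgdef, natDegree_sub_C, hdeg]
    have h2 : ∀ z : ℂ, ‖z‖ < 1 → ‖g.eval z‖ < 1 := by
      intro z hz
      have hmem : q.eval z ∈ innerImage q (Metric.ball (0:ℂ) 1) := by
        rw [h]; exact ⟨z, by simpa [Metric.mem_ball] using hz, rfl⟩
      have h4 := innerImage_subset_ball q hq hd1 hmem
      rw [Metric.mem_ball, dist_eq_norm] at h4
      simpa [hgdef] using h4
    have h1 : ∀ z : ℂ, 1 ≤ ‖z‖ → 1 ≤ ‖g.eval z‖ := by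
      intro z hz
      by_contra hlt
      push_neg at hlt
      have hb : q.eval z ∈ Metric.ball c 1 := by
        rw [Metric.mem_ball, dist_eq_norm]
        simpa [hgdef] using hlt
      have h3 := ball_subset_image q hq hd1 hb
      rw [← h] at h3
      have h5 := h3 z rfl
      rw [Metric.mem_ball, dist_zero_right] at h5
      linarith
    have hsphere : ∀ w : ℂ, ‖w‖ = 1 → ‖g.eval w‖ ≤ 1 := by
      intro w hw
      have hcl : closure (Metric.ball (0:ℂ) 1) ⊆ {z : ℂ | ‖g.eval z‖ ≤ 1} := by
        apply closure_minimal
        · intro z hz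
          rw [Metric.mem_ball, dist_zero_right] at hz
          exact le_of_lt (h2 z hz)
        · exact isClosed_le (g.continuous.norm) continuous_const
      apply hcl
      rw [closure_ball (0:ℂ) one_ne_zero, Metric.mem_closedBall, dist_zero_right, hw]
    set F := reflect d g with hF
    have hF0 : F.eval 0 = 1 := by
      rw [← coeff_zero_eq_eval_zero, hF, coeff_reflect, revAt_le (Nat.zero_le d),
        Nat.sub_zero]
      have h6 := hgm.coeff_natDegree
      rwa [hgd] at h6
    have hFeval : ∀ w : ℂ, w ≠ 0 → F.eval w = g.eval w⁻¹ * w ^ d := by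
      intro w hw
      have hw' : w⁻¹ ≠ 0 := inv_ne_zero hw
      letI : Invertible (w⁻¹) := invertibleOfNonzero hw'
      have h7 := eval₂_reflect_mul_pow (RingHom.id ℂ) (w⁻¹) d g hgd.le
      rw [invOf_eq_inv, inv_inv] at h7
      have h8 : F.eval w * (w⁻¹) ^ d = g.eval w⁻¹ := h7
      have h9 : (w⁻¹) ^ d * w ^ d = 1 := by
        rw [← mul_pow, inv_mul_cancel₀ hw, one_pow]
      calc F.eval w = F.eval w * ((w⁻¹) ^ d * w ^ d) := by rw [h9, mul_one]
        _ = (F.eval w * (w⁻¹) ^ d) * w ^ d := by ring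
        _ = g.eval w⁻¹ * w ^ d := by rw [h8]
    have hFsphere : ∀ w : ℂ, ‖w‖ = 1 → ‖F.eval w‖ ≤ 1 := by
      intro w hw
      have hw0 : w ≠ 0 := by
        intro h0; rw [h0] at hw; simp at hw
      rw [hFeval w hw0, norm_mul, norm_pow, hw, one_pow, mul_one]
      apply hsphere
      rw [norm_inv, hw]; norm_num
    have hFle : ∀ z ∈ closure (Metric.ball (0:ℂ) 1), ‖F.eval z‖ ≤ 1 := by
      intro z hz
      apply Complex.norm_le_of_forall_mem_frontier_norm_le Metric.isBounded_ball
        (F.differentiable.diffContOnCl) _ hz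
      intro w hw
      rw [frontier_ball (0:ℂ) one_ne_zero] at hw
      exact hFsphere w (by simpa [dist_zero_right] using hw)
    have hmax : IsMaxOn (norm ∘ F.eval) (Metric.ball (0:ℂ) 1) 0 := by
      rw [isMaxOn_iff]
      intro z hz
      simp only [Function.comp_apply, hF0, norm_one]
      exact hFle z (subset_closure hz)
    have heq := Complex.eqOn_of_isPreconnected_of_isMaxOn_norm
      (convex_ball (0:ℂ) 1).isPreconnected Metric.isOpen_ball
      (F.differentiable.differentiableOn) (Metric.mem_ball_self one_pos) hmax
    have hFC : F = C 1 := by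
      have hzero : F - C 1 = 0 := by
        apply eq_zero_of_infinite_isRoot
        apply Set.infinite_of_injective_forall_mem
          (f := fun n : ℕ => (((n : ℂ) + 2))⁻¹)
        · intro a b hab
          have h10 : ((a : ℂ) + 2) = ((b : ℂ) + 2) := inv_injective hab
          exact Nat.cast_injective (add_right_cancel h10)
        · intro n
          have hnorm : ‖(((n : ℂ) + 2))⁻¹‖ < 1 := by
            rw [norm_inv]
            have : (2:ℝ) ≤ ‖((n : ℂ) + 2)‖ := by
              have : ((n : ℂ) + 2) = ((n + 2 : ℕ) : ℂ) := by push_cast; ring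
              rw [this, Complex.norm_natCast]
              exact_mod_cast Nat.le_add_left 2 n
            rw [inv_lt_one_iff₀]
            right; linarith
          have hmem : (((n : ℂ) + 2))⁻¹ ∈ Metric.ball (0:ℂ) 1 := by
            rwa [Metric.mem_ball, dist_zero_right]
          have h11 := heq hmem
          simp only [Function.const_apply, hF0] at h11
          simp [IsRoot, h11]
      have := sub_eq_zero.mp hzero
      exact this
    have hgcoeff : ∀ k, k < d → g.coeff k = 0 := by
      intro k hk
      have h6 : F.coeff (d - k) = g.coeff k := by
        rw [hF, coeff_reflect, revAt_le (Nat.sub_le d k)]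
        congr 1
        omega
      rw [hFC, coeff_C, if_neg (by omega)] at h6
      exact h6.symm
    have hgX : g = X ^ d := by
      ext n
      rcases lt_trichotomy n d with hlt|heqn|hgt
      · rw [hgcoeff n hlt, coeff_X_pow, if_neg (by omega)]
      · subst heqn
        rw [coeff_X_pow, if_pos rfl]
        have h6 := hgm.coeff_natDegree
        rwa [hgd] at h6
      · rw [coeff_eq_zero_of_natDegree_lt (by rw [hgd]; omega),
          coeff_X_pow, if_neg (by omega)]
    exact ⟨c, by rw [← hgX, hgdef]; ring⟩
  · rintro ⟨c, rfl⟩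
    have hq0 : (X ^ d + C c : Polynomial ℂ).eval 0 = c := by
      simp [zero_pow (by omega : d ≠ 0)]
    have heval : ∀ z : ℂ, (X ^ d + C c : Polynomial ℂ).eval z = z ^ d + c := by
      intro z; simp
    apply Set.Subset.antisymm
    · intro u hu
      have hball := innerImage_subset_ball _ hq hd1 hu
      exact ball_subset_image _ hq hd1 hball
    · rintro u ⟨z, hz, rfl⟩
      intro w hw
      simp only [heval] at hw
      have hzd : ‖z‖ < 1 := by simpa [Metric.mem_ball] using hz
      have hwz : w ^ d = z ^ d := by linear_combination hw
      rw [Metric.mem_ball, dist_zero_right]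
      by_contra hge
      push_neg at hge
      have hb1 : (1:ℝ) ≤ ‖w‖ ^ d := one_le_pow₀ hge
      have hb2 : ‖w‖ ^ d = ‖z‖ ^ d := by
        rw [← norm_pow, ← norm_pow, hwz]
      have hb3 : ‖z‖ ^ d < 1 := pow_lt_one₀ (norm_nonneg z) hzd (by omega)
      linarith
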